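/- Let G be a group, I ⊆ Z[G] the augmentation ideal and I_p = Ker(Z[G] → Z/p) the p-augmentation ideal. Define Z[G]^{[n]} := Σ_{a + m·b ≥ n} p^a I^b for fixed m ≥ 1. Then the filtration Z[G]^{[·]} defines the same topology as the I_p-adic filtration: one has Z[G]^{[mn]} ⊆ I_p^n ⊆ Z[G]^{[n]} for all n ≥ 0. -/

import Mathlib

open Pointwise

noncomputable section

variable (p m : ℕ) (G : Type*) [Group G]

/-- The augmentation `ℤ[G] → ℤ`. -/
def augZ : MonoidAlgebra ℤ G →ₐ[ℤ] ℤ := (MonoidAlgebra.lift ℤ ℤ G) 1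

/-- The augmentation ideal `I = Ker(ℤ[G] → ℤ)`, as a `ℤ`-submodule of `ℤ[G]`. -/
def augIdeal : Submodule ℤ (MonoidAlgebra ℤ G) := LinearMap.ker (augZ G).toLinearMap

/-- The `p`-augmentation ideal `I_p = Ker(ℤ[G] → ℤ/p)`. -/
def augIdealP : Submodule ℤ (MonoidAlgebra ℤ G) :=
  LinearMap.ker (((Int.castRingHom (ZMod p)).comp
    (augZ G).toRingHom).toAddMonoidHom.toIntLinearMap)

/-- Powers of a two-sided ideal (as a `ℤ`-submodule), with the convention
`I^0 = ℤ[G]`. -/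
def idealPow (I : Submodule ℤ (MonoidAlgebra ℤ G)) : ℕ → Submodule ℤ (MonoidAlgebra ℤ G)
  | 0 => ⊤
  | (b + 1) => I ^ (b + 1)

/-- The filtration `ℤ[G]^{[n]} := Σ_{a + m·b ≥ n} p^a I^b`. -/
def lazardFilt (n : ℕ) : Submodule ℤ (MonoidAlgebra ℤ G) :=
  ⨆ (a : ℕ) (b : ℕ) (_ : n ≤ a + m * b),
    ((p : ℤ) ^ a • idealPow G (augIdeal G) b)

/-! ### Auxiliary lemmas -/

lemma mem_augIdealP_iff (x : MonoidAlgebra ℤ G) :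
    x ∈ augIdealP p G ↔ ((augZ G x : ℤ) : ZMod p) = 0 := Iff.rfl

lemma augIdeal_le_augIdealP : augIdeal G ≤ augIdealP p G := fun x hx => by
  show ((augZ G x : ℤ) : ZMod p) = 0
  rw [show augZ G x = 0 from hx]; simp

lemma p_smul_one_mem : ((p : ℤ) • (1 : MonoidAlgebra ℤ G)) ∈ augIdealP p G := by
  show ((augZ G ((p : ℤ) • 1) : ℤ) : ZMod p) = 0
  simp

lemma augIdealP_mul_top : augIdealP p G * ⊤ ≤ augIdealP p G := by
  rw [Submodule.mul_le]
  intro x hx y _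
  show ((augZ G (x * y) : ℤ) : ZMod p) = 0
  rw [map_mul]
  push_cast
  rw [show ((augZ G x : ℤ) : ZMod p) = 0 from hx, zero_mul]

lemma augIdeal_mul_top : augIdeal G * ⊤ ≤ augIdeal G := by
  rw [Submodule.mul_le]
  intro x hx y _
  show augZ G (x * y) = 0
  rw [map_mul, show augZ G x = 0 from hx, zero_mul]

lemma top_mul_augIdeal : ⊤ * augIdeal G ≤ augIdeal G := by
  rw [Submodule.mul_le]
  intro x _ y hy
  show augZ G (x * y) = 0
  rw [map_mul, show augZ G y = 0 from hy, mul_zero]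

lemma pow_mul_top {K : Submodule ℤ (MonoidAlgebra ℤ G)} (hK : K * ⊤ ≤ K) (b : ℕ) :
    K ^ (b + 1) * ⊤ ≤ K ^ (b + 1) := by
  rw [pow_succ, mul_assoc]
  calc K ^ b * (K * ⊤) ≤ K ^ b * K := mul_le_mul' le_rfl hK
    _ = K ^ (b + 1) := (pow_succ K b).symm

lemma idealPow_mul_top_le {K : Submodule ℤ (MonoidAlgebra ℤ G)} (hK : K * ⊤ ≤ K) (b : ℕ) :
    idealPow G K b * ⊤ ≤ idealPow G K b := by
  cases b with
  | zero => exact le_top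
  | succ c => exact pow_mul_top G hK c

lemma idealPow_anti {K : Submodule ℤ (MonoidAlgebra ℤ G)} (hK : K * ⊤ ≤ K) {n k : ℕ}
    (h : n ≤ k) : idealPow G K k ≤ idealPow G K n := by
  cases n with
  | zero => exact le_top
  | succ j =>
    obtain ⟨d, rfl⟩ : ∃ d, k = (j + 1) + d := ⟨k - (j + 1), by omega⟩
    rw [show j + 1 + d = (j + d) + 1 from by omega]
    show K ^ (j + d + 1) ≤ K ^ (j + 1)
    have h1 : K ^ (j + d + 1) = K ^ (j + 1) * K ^ d := by
      rw [← pow_add]; congr 1; omega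
    rw [h1]
    calc K ^ (j + 1) * K ^ d ≤ K ^ (j + 1) * ⊤ := mul_le_mul' le_rfl le_top
      _ ≤ K ^ (j + 1) := pow_mul_top G hK j

lemma powLePowLeft {K K' : Submodule ℤ (MonoidAlgebra ℤ G)} (h : K ≤ K') (b : ℕ) :
    K ^ b ≤ K' ^ b := by
  induction b with
  | zero => simp
  | succ b ih => rw [pow_succ, pow_succ]; exact mul_le_mul' ih h

lemma smul_mul_le (c : ℤ) (M N : Submodule ℤ (MonoidAlgebra ℤ G)) :
    (c • M) * N ≤ c • (M * N) := by
  rw [Submodule.mul_le]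
  intro x hx y hy
  obtain ⟨z, hz, rfl⟩ := hx
  show c • z * y ∈ c • (M * N)
  rw [smul_mul_assoc]
  exact Submodule.smul_mem_pointwise_smul _ _ _ (Submodule.mul_mem_mul hz hy)

lemma smul_mul_smul_le (c d : ℤ) (M N : Submodule ℤ (MonoidAlgebra ℤ G)) :
    (c • M) * (d • N) ≤ (c * d) • (M * N) := by
  rw [Submodule.mul_le]
  intro x hx y hy
  obtain ⟨z, hz, rfl⟩ := hx
  obtain ⟨w, hw, rfl⟩ := hy
  show (c • z) * (d • w) ∈ (c * d) • (M * N)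
  have h1 : (c • z) * (d • w) = (c * d) • (z * w) := by
    rw [smul_mul_assoc, mul_smul_comm, smul_smul]
  rw [h1]
  exact Submodule.smul_mem_pointwise_smul _ _ _ (Submodule.mul_mem_mul hz hw)

lemma smul_le_mul_augIdealP (M : Submodule ℤ (MonoidAlgebra ℤ G)) :
    (p : ℤ) • M ≤ augIdealP p G * M := by
  intro x hx
  obtain ⟨y, hy, rfl⟩ := hx
  show (p : ℤ) • y ∈ augIdealP p G * M
  rw [show (p : ℤ) • y = ((p : ℤ) • (1 : MonoidAlgebra ℤ G)) * y from by
    rw [smul_mul_assoc, one_mul]]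
  exact Submodule.mul_mem_mul (p_smul_one_mem p G) hy

lemma mul_idealPow_le {K : Submodule ℤ (MonoidAlgebra ℤ G)} (hK : K * ⊤ ≤ K) (k : ℕ) :
    K * idealPow G K k ≤ idealPow G K (k + 1) := by
  cases k with
  | zero =>
    show K * ⊤ ≤ K ^ 1
    rw [pow_one]; exact hK
  | succ c =>
    show K * K ^ (c + 1) ≤ K ^ (c + 2)
    rw [pow_succ' K (c + 1)]

lemma idealPow_mul_augIdeal_le (b : ℕ) :
    idealPow G (augIdeal G) b * augIdeal G ≤ idealPow G (augIdeal G) (b + 1) := by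
  cases b with
  | zero =>
    show ⊤ * augIdeal G ≤ (augIdeal G) ^ 1
    rw [pow_one]; exact top_mul_augIdeal G
  | succ c =>
    show (augIdeal G) ^ (c + 1) * augIdeal G ≤ (augIdeal G) ^ (c + 2)
    rw [pow_succ (augIdeal G) (c + 1)]

lemma smul_pow_le (a b : ℕ) :
    (p : ℤ) ^ a • idealPow G (augIdeal G) b ≤ idealPow G (augIdealP p G) (a + b) := by
  induction a with
  | zero =>
    rw [pow_zero, one_smul, Nat.zero_add]
    cases b with
    | zero => exact le_rfl
    | succ c =>
      show (augIdeal G) ^ (c + 1) ≤ (augIdealP p G) ^ (c + 1)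
      exact powLePowLeft G (augIdeal_le_augIdealP p G) (c + 1)
  | succ a ih =>
    have h1 : (p : ℤ) ^ (a + 1) • idealPow G (augIdeal G) b
        = (p : ℤ) • ((p : ℤ) ^ a • idealPow G (augIdeal G) b) := by
      rw [smul_smul, ← pow_succ']
    rw [h1, show a + 1 + b = (a + b) + 1 from by omega]
    calc (p : ℤ) • ((p : ℤ) ^ a • idealPow G (augIdeal G) b)
        ≤ (p : ℤ) • idealPow G (augIdealP p G) (a + b) := smul_mono_right _ ih
      _ ≤ augIdealP p G * idealPow G (augIdealP p G) (a + b) := smul_le_mul_augIdealP p G _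
      _ ≤ idealPow G (augIdealP p G) (a + b + 1) :=
          mul_idealPow_le G (augIdealP_mul_top p G) (a + b)

lemma le_lazardFilt {n a b : ℕ} (h : n ≤ a + m * b) :
    (p : ℤ) ^ a • idealPow G (augIdeal G) b ≤ lazardFilt p m G n :=
  le_iSup_of_le a (le_iSup_of_le b (le_iSup_of_le h le_rfl))

lemma lazardFilt_le {n : ℕ} {T : Submodule ℤ (MonoidAlgebra ℤ G)}
    (hT : ∀ a b : ℕ, n ≤ a + m * b → (p : ℤ) ^ a • idealPow G (augIdeal G) b ≤ T) :
    lazardFilt p m G n ≤ T :=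
  iSup_le fun a => iSup_le fun b => iSup_le fun h => hT a b h

lemma lazardFilt_mul_augIdeal (hm : 1 ≤ m) (n : ℕ) :
    lazardFilt p m G n * augIdeal G ≤ lazardFilt p m G (n + 1) := by
  rw [lazardFilt, Submodule.iSup_mul]
  refine iSup_le fun a => ?_
  rw [Submodule.iSup_mul]
  refine iSup_le fun b => ?_
  rw [Submodule.iSup_mul]
  refine iSup_le fun h => ?_
  calc ((p : ℤ) ^ a • idealPow G (augIdeal G) b) * augIdeal G
      ≤ (p : ℤ) ^ a • (idealPow G (augIdeal G) b * augIdeal G) := smul_mul_le G _ _ _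
    _ ≤ (p : ℤ) ^ a • idealPow G (augIdeal G) (b + 1) :=
        smul_mono_right _ (idealPow_mul_augIdeal_le G b)
    _ ≤ lazardFilt p m G (n + 1) := le_lazardFilt p m G (by
        have h2 : m * (b + 1) = m * b + m := by ring
        rw [h2]
        have h3 : n ≤ a + m * b := h
        omega)

lemma lazardFilt_mul_pTop (n : ℕ) :
    lazardFilt p m G n * ((p : ℤ) • (⊤ : Submodule ℤ (MonoidAlgebra ℤ G)))
      ≤ lazardFilt p m G (n + 1) := by
  rw [lazardFilt, Submodule.iSup_mul]
  refine iSup_le fun a => ?_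
  rw [Submodule.iSup_mul]
  refine iSup_le fun b => ?_
  rw [Submodule.iSup_mul]
  refine iSup_le fun h => ?_
  calc ((p : ℤ) ^ a • idealPow G (augIdeal G) b) * ((p : ℤ) • ⊤)
      ≤ ((p : ℤ) ^ a * (p : ℤ)) • (idealPow G (augIdeal G) b * ⊤) := smul_mul_smul_le G _ _ _ _
    _ = (p : ℤ) ^ (a + 1) • (idealPow G (augIdeal G) b * ⊤) := by rw [← pow_succ]
    _ ≤ (p : ℤ) ^ (a + 1) • idealPow G (augIdeal G) b :=
        smul_mono_right _ (idealPow_mul_top_le G (augIdeal_mul_top G) b)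
    _ ≤ lazardFilt p m G (n + 1) := le_lazardFilt p m G (by
        have h3 : n ≤ a + m * b := h
        omega)

lemma augIdealP_le_sup :
    augIdealP p G ≤ augIdeal G ⊔ ((p : ℤ) • (⊤ : Submodule ℤ (MonoidAlgebra ℤ G))) := by
  intro x hx
  have hx' : ((augZ G x : ℤ) : ZMod p) = 0 := hx
  obtain ⟨k, hk⟩ : (p : ℤ) ∣ augZ G x :=
    (ZMod.intCast_zmod_eq_zero_iff_dvd (augZ G x) p).mp hx'
  refine Submodule.mem_sup.mpr ⟨x - (augZ G x) • 1, ?_, (augZ G x) • 1, ?_, by abel⟩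
  · show augZ G (x - (augZ G x) • 1) = 0
    rw [map_sub, map_smul, map_one, smul_eq_mul, mul_one, sub_self]
  · rw [hk, mul_smul]
    exact Submodule.smul_mem_pointwise_smul _ _ _ Submodule.mem_top

lemma pow_augIdealP_le_lazard (hm : 1 ≤ m) (n : ℕ) :
    idealPow G (augIdealP p G) n ≤ lazardFilt p m G n := by
  induction n with
  | zero =>
    have h0 := le_lazardFilt p m G (n := 0) (a := 0) (b := 0) (by omega)
    simpa [idealPow] using h0
  | succ n ih =>
    cases n with
    | zero =>
      show (augIdealP p G) ^ 1 ≤ lazardFilt p m G 1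
      rw [pow_one]
      refine le_trans (augIdealP_le_sup p G) (sup_le ?_ ?_)
      · have h1 := le_lazardFilt p m G (n := 1) (a := 0) (b := 1) (by omega)
        simpa [idealPow, pow_one] using h1
      · have h1 := le_lazardFilt p m G (n := 1) (a := 1) (b := 0) (by omega)
        simpa [idealPow, pow_one] using h1
    | succ c =>
      show (augIdealP p G) ^ (c + 2) ≤ lazardFilt p m G (c + 2)
      rw [pow_succ (augIdealP p G) (c + 1)]
      calc (augIdealP p G) ^ (c + 1) * augIdealP p G
          ≤ lazardFilt p m G (c + 1)
              * (augIdeal G ⊔ (p : ℤ) • (⊤ : Submodule ℤ (MonoidAlgebra ℤ G))) :=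
            mul_le_mul' ih (augIdealP_le_sup p G)
        _ = lazardFilt p m G (c + 1) * augIdeal G
              ⊔ lazardFilt p m G (c + 1)
                * ((p : ℤ) • (⊤ : Submodule ℤ (MonoidAlgebra ℤ G))) := Submodule.mul_sup _ _ _
        _ ≤ lazardFilt p m G (c + 2) :=
            sup_le (lazardFilt_mul_augIdeal p m G hm (c + 1)) (lazardFilt_mul_pTop p m G (c + 1))

lemma lazard_le_pow_augIdealP (hm : 1 ≤ m) (n : ℕ) :
    lazardFilt p m G (m * n) ≤ idealPow G (augIdealP p G) n := by
  refine lazardFilt_le p m G fun a b h => ?_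
  have hn : n ≤ a + b := by
    rcases le_or_gt n b with h' | h'
    · omega
    · obtain ⟨c, rfl⟩ : ∃ c, n = b + c := ⟨n - b, by omega⟩
      rw [Nat.mul_add] at h
      have h2 : m * c ≤ a := by linarith
      have h3 : c ≤ m * c := Nat.le_mul_of_pos_left c (by omega)
      omega
  exact (smul_pow_le p G a b).trans (idealPow_anti G (augIdealP_mul_top p G) hn)

/-- For a group `G`, the augmentation ideal `I ⊆ ℤ[G]`, the
`p`-augmentation ideal `I_p = Ker(ℤ[G] → ℤ/p)` and the filtration
`ℤ[G]^{[n]} = Σ_{a + m·b ≥ n} p^a I^b` (with `m ≥ 1` fixed), the filtration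
`ℤ[G]^{[·]}` defines the same topology as the `I_p`-adic filtration:
`ℤ[G]^{[mn]} ⊆ I_pⁿ ⊆ ℤ[G]^{[n]}` for all `n ≥ 0`. -/
theorem stmt_17 (hp : p.Prime) (hm : 1 ≤ m) (n : ℕ) :
    lazardFilt p m G (m * n) ≤ idealPow G (augIdealP p G) n ∧
    idealPow G (augIdealP p G) n ≤ lazardFilt p m G n :=
  ⟨lazard_le_pow_augIdealP p m G hm n, pow_augIdealP_le_lazard p m G hm n⟩

end
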